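/- The Franel numbers of order 3, F_n = Σ_{k=0}^n C(n,k)^3, satisfy 5 ≤ F_n / F_{n-1} ≤ 9 for all n ≥ 2. -/

import Mathlib

lemma franel_nb (M j : ℕ) (hM : 1 ≤ M) :
    (Nat.choose M (j+1) : ℝ) ≤ Nat.choose M j + Nat.choose M (j+2) := by
  rcases lt_or_ge M (j+1) with h | h
  · rw [Nat.choose_eq_zero_of_lt h]
    push_cast
    positivity
  rcases eq_or_lt_of_le h with h1 | h1
  · have hy1 : M.choose (j+1) = 1 := by rw [h1, Nat.choose_self]
    have hz0 : M.choose (j+2) = 0 := Nat.choose_eq_zero_of_lt (by omega)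
    have hx1 : 1 ≤ M.choose j := Nat.choose_pos (show j ≤ M by omega)
    rw [hy1, hz0]
    have : (1:ℝ) ≤ M.choose j := by exact_mod_cast hx1
    push_cast
    linarith
  · have hj2 : j + 2 ≤ M := h1
    set x := (Nat.choose M j : ℝ) with hxd
    set y := (Nat.choose M (j+1) : ℝ) with hyd
    set z := (Nat.choose M (j+2) : ℝ) with hzd
    have hx : (1:ℝ) ≤ x := by
      have : 1 ≤ M.choose j := Nat.choose_pos (show j ≤ M by omega)
      rw [hxd]; exact_mod_cast this
    have hy : (1:ℝ) ≤ y := by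
      have : 1 ≤ M.choose (j+1) := Nat.choose_pos (show j+1 ≤ M by omega)
      rw [hyd]; exact_mod_cast this
    have hz : (1:ℝ) ≤ z := by
      have : 1 ≤ M.choose (j+2) := Nat.choose_pos hj2
      rw [hzd]; exact_mod_cast this
    have e1 : y * (j+1) = x * ((M:ℝ) - j) := by
      have hc := congrArg (Nat.cast (R := ℝ)) (Nat.choose_succ_right_eq M j)
      push_cast [Nat.cast_sub (show j ≤ M by omega)] at hc
      linarith [hc]
    have e2 : z * (j+2) = y * ((M:ℝ) - j - 1) := by
      have hc := congrArg (Nat.cast (R := ℝ)) (Nat.choose_succ_right_eq M (j+1))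
      push_cast [Nat.cast_sub (show j+1 ≤ M by omega)] at hc
      linarith [hc]
    have hb : (2:ℝ) ≤ (M:ℝ) - j := by
      have : (j:ℝ) + 2 ≤ M := by exact_mod_cast hj2
      linarith
    have hp : (0:ℝ) ≤ (j:ℝ) := Nat.cast_nonneg j
    set p := (j:ℝ)
    set b := (M:ℝ) - (j:ℝ)
    have e3 : z * (p+1) * (p+2) = x * b * (b-1) := by
      have h4 : z * (p+2) * (y * (p+1)) = y * (b-1) * (x * b) := by
        rw [e2, e1]
      have hy0 : y ≠ 0 := by linarith
      have h4' : (z*(p+1)*(p+2)) * y = (x*b*(b-1)) * y := by linear_combination h4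
      exact mul_right_cancel₀ hy0 h4'
    have key : b * (p+2) ≤ 4 * (b-1) * (p+1) := by nlinarith
    have hsq : y^2 ≤ 4 * x * z := by
      have hfac : (0:ℝ) < (p+1)^2*(p+2) := by positivity
      have h5 : y^2 * ((p+1)^2*(p+2)) = x^2*b^2*(p+2) := by
        calc y^2 * ((p+1)^2*(p+2)) = (y*(p+1))^2*(p+2) := by ring
          _ = (x*b)^2*(p+2) := by rw [e1]
          _ = x^2*b^2*(p+2) := by ring
      have h6 : 4*x*z*((p+1)^2*(p+2)) = 4*x^2*b*(b-1)*(p+1) := by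
        calc 4*x*z*((p+1)^2*(p+2)) = (4*x*(p+1))*(z*(p+1)*(p+2)) := by ring
          _ = (4*x*(p+1))*(x*b*(b-1)) := by rw [e3]
          _ = 4*x^2*b*(b-1)*(p+1) := by ring
      have key2 := mul_le_mul_of_nonneg_left key
        (show (0:ℝ) ≤ x^2*b by nlinarith [sq_nonneg x])
      nlinarith [h5, h6, key2, hfac]
    nlinarith [hsq, sq_nonneg (x - z), hx, hz, hy]

theorem franel_quotient_bounds (F : ℕ → ℝ)
    (hF : ∀ n, F n = ∑ k ∈ Finset.range (n + 1), ((n.choose k : ℝ)) ^ 3) :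
    ∀ n ≥ 2, 5 ≤ F n / F (n - 1) ∧ F n / F (n - 1) ≤ 9 := by
  intro n hn
  obtain ⟨m, rfl⟩ : ∃ m, n = m + 2 := ⟨n - 2, by omega⟩
  set a : ℕ → ℝ := fun k => ((m+1).choose k : ℝ) with ha
  have ha0 : ∀ k, 0 ≤ a k := fun k => Nat.cast_nonneg _
  have hFm : F (m+1) = ∑ k ∈ Finset.range (m+2), a k ^ 3 := hF (m+1)
  have h00 : a 0 = 1 := by simp [ha]
  have hamax : a (m+2) = 0 := by
    simp only [ha]
    rw [Nat.choose_eq_zero_of_lt (by omega)]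
    simp
  have hF1 : (1:ℝ) ≤ F (m+1) := by
    rw [hFm]
    calc (1:ℝ) = a 0 ^ 3 := by rw [h00]; norm_num
      _ ≤ ∑ k ∈ Finset.range (m+2), a k ^ 3 :=
        Finset.single_le_sum (f := fun k => a k ^ 3)
          (fun i _ => by positivity) (Finset.mem_range.mpr (by omega))
  have htail : ∑ j ∈ Finset.range (m+2), a (j+1) ^ 3 = F (m+1) - 1 := by
    have h1 : ∑ k ∈ Finset.range (m+3), a k ^ 3
        = ∑ j ∈ Finset.range (m+2), a (j+1) ^ 3 + a 0 ^ 3 :=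
      Finset.sum_range_succ' (fun k => a k ^ 3) (m+2)
    have h2 : ∑ k ∈ Finset.range (m+3), a k ^ 3
        = ∑ k ∈ Finset.range (m+2), a k ^ 3 + a (m+2) ^ 3 :=
      Finset.sum_range_succ (fun k => a k ^ 3) (m+2)
    rw [hamax] at h2
    rw [h00] at h1
    rw [hFm]
    norm_num at h1 h2
    linarith [h1, h2]
  set S := ∑ j ∈ Finset.range (m+2), (a j ^ 2 * a (j+1) + a j * a (j+1) ^ 2) with hS
  have hkey : F (m+2) = 2 * F (m+1) + 3 * S := by
    rw [hF (m+2)]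
    have h1 : ∑ k ∈ Finset.range (m+3), (((m+2).choose k : ℝ)) ^ 3
        = ∑ j ∈ Finset.range (m+2), (((m+2).choose (j+1) : ℝ)) ^ 3
          + (((m+2).choose 0 : ℝ)) ^ 3 :=
      Finset.sum_range_succ' (fun k => (((m+2).choose k : ℝ)) ^ 3) (m+2)
    have h2 : ∀ j, (((m+2).choose (j+1) : ℝ)) = a j + a (j+1) := by
      intro j
      have h := Nat.choose_succ_succ (m+1) j
      simp only [ha]
      exact_mod_cast congrArg (Nat.cast (R := ℝ)) h
    have h3 : ∑ j ∈ Finset.range (m+2), (((m+2).choose (j+1) : ℝ)) ^ 3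
        = ∑ j ∈ Finset.range (m+2), (a j ^ 3 + a (j+1) ^ 3
            + 3 * (a j ^ 2 * a (j+1) + a j * a (j+1) ^ 2)) := by
      refine Finset.sum_congr rfl (fun j _ => ?_)
      rw [h2 j]; ring
    have h4 : ∑ j ∈ Finset.range (m+2), (a j ^ 3 + a (j+1) ^ 3
            + 3 * (a j ^ 2 * a (j+1) + a j * a (j+1) ^ 2))
        = (∑ j ∈ Finset.range (m+2), a j ^ 3)
          + (∑ j ∈ Finset.range (m+2), a (j+1) ^ 3) + 3 * S := by
      rw [hS, Finset.mul_sum, ← Finset.sum_add_distrib, ← Finset.sum_add_distrib]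
    rw [h1, h3, h4, htail, ← hFm]
    norm_num
    ring
  have hup : S ≤ 2 * F (m+1) := by
    have h1 : S ≤ ∑ j ∈ Finset.range (m+2), (a j ^ 3 + a (j+1) ^ 3) := by
      refine Finset.sum_le_sum (fun j _ => ?_)
      nlinarith [mul_nonneg (add_nonneg (ha0 j) (ha0 (j+1))) (sq_nonneg (a j - a (j+1)))]
    have h2 : ∑ j ∈ Finset.range (m+2), (a j ^ 3 + a (j+1) ^ 3)
        = F (m+1) + (F (m+1) - 1) := by
      rw [Finset.sum_add_distrib, htail, ← hFm]
    linarith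
  have hlow : F (m+1) ≤ S := by
    set g : ℕ → ℝ := fun i => if i = 0 then 0 else a (i-1) * a i ^ 2 with hg
    have hs2 : ∑ j ∈ Finset.range (m+2), a j * a (j+1) ^ 2
        = ∑ i ∈ Finset.range (m+2), g i := by
      have h1 : ∑ i ∈ Finset.range (m+3), g i
          = ∑ j ∈ Finset.range (m+2), g (j+1) + g 0 :=
        Finset.sum_range_succ' g (m+2)
      have h2 : ∑ i ∈ Finset.range (m+3), g i
          = ∑ i ∈ Finset.range (m+2), g i + g (m+2) :=
        Finset.sum_range_succ g (m+2)
      have hg0 : g 0 = 0 := by simp [hg]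
      have hgm : g (m+2) = 0 := by simp [hg, hamax]
      have h3 : ∑ j ∈ Finset.range (m+2), g (j+1)
          = ∑ j ∈ Finset.range (m+2), a j * a (j+1) ^ 2 := by
        refine Finset.sum_congr rfl (fun j _ => ?_)
        simp [hg]
      rw [hg0, h3] at h1
      rw [hgm] at h2
      linarith [h1, h2]
    have hterm : ∀ i ∈ Finset.range (m+2), a i ^ 3 ≤ a i ^ 2 * a (i+1) + g i := by
      intro i _
      match i with
      | 0 =>
        have h1 : a 1 = (m+1 : ℝ) := by
          simp only [ha]
          rw [Nat.choose_one_right]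
          push_cast
          ring
        simp only [hg, if_pos rfl, h00, add_zero]
        rw [h1]
        have : (1:ℝ) ≤ (m:ℝ) + 1 := by
          have := Nat.cast_nonneg (α := ℝ) m
          linarith
        push_cast
        nlinarith [this]
      | k+1 =>
        have hnb := franel_nb (m+1) k (by omega)
        have hnb' : a (k+1) ≤ a k + a (k+2) := hnb
        have hgk : g (k+1) = a k * a (k+1) ^ 2 := by simp [hg]
        rw [hgk]
        nlinarith [hnb', sq_nonneg (a (k+1)), ha0 (k+1), ha0 k, ha0 (k+2)]
    have h5 : ∑ i ∈ Finset.range (m+2), a i ^ 3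
        ≤ ∑ i ∈ Finset.range (m+2), (a i ^ 2 * a (i+1) + g i) :=
      Finset.sum_le_sum hterm
    have h6 : ∑ i ∈ Finset.range (m+2), (a i ^ 2 * a (i+1) + g i) = S := by
      rw [hS, Finset.sum_add_distrib, Finset.sum_add_distrib, ← hs2]
    rw [hFm]
    linarith [h5, h6]
  have hFpos : (0:ℝ) < F (m+1) := by linarith
  have hsub : m + 2 - 1 = m + 1 := rfl
  rw [hsub]
  constructor
  · rw [le_div_iff₀ hFpos]
    linarith
  · rw [div_le_iff₀ hFpos]
    linarith
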